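/- Let T be a string of length n. The total number of distinct closed factors of T equals Σ_{j∈J} |lrs(T[1..j])| − Σ_{j∈J} |lrs²(T[1..j])| + n − |J|, where J = { j ∈ [1,n] : lrs(T[1..j]) ≠ ε }. -/

import Mathlib

variable {α : Type*} [DecidableEq α]

/-- Number of occurrences of `s` as a factor of `w` (starting positions, 0-indexed). -/
def countOcc (s w : List α) : ℕ :=
  ((Finset.range (w.length + 1)).filter (fun i => s <+: w.drop i)).card

/-- `b` is a border of `w`. -/
def IsBorder (b w : List α) : Prop := b ≠ w ∧ b <+: w ∧ b <:+ w

/-- The longest border of `w`. -/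
def bord (w : List α) : List α :=
  w.take (((Finset.range w.length).filter (fun k => w.take k <:+ w)).sup id)

/-- A string is closed if its length is one, or it has a nonempty border occurring
exactly twice in it. -/
def IsClosedStr (w : List α) : Prop :=
  w.length = 1 ∨ ∃ b : List α, b ≠ [] ∧ IsBorder b w ∧ countOcc b w = 2

/-- The longest repeating suffix of `w` (the empty string if none). -/
def lrs (w : List α) : List α :=
  w.drop (w.length -
    ((Finset.range (w.length + 1)).filter
      (fun k => 2 ≤ countOcc (w.drop (w.length - k)) w)).sup id)

/-- `u` is a factor (contiguous substring) of `w`. -/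
def IsFactor (u w : List α) : Prop := ∃ s t : List α, w = s ++ u ++ t

/-- The set of all factors of `w`. -/
def factors (w : List α) : Finset (List α) :=
  (Finset.range (w.length + 1) ×ˢ Finset.range (w.length + 1)).image
    (fun p => (w.drop p.1).take p.2)

/-- The set of distinct closed factors of `w`. -/
noncomputable def closedFactors (w : List α) : Finset (List α) :=
  @Finset.filter _ IsClosedStr (Classical.decPred _) (factors w)

open Classical

/-! ### Occurrence sets -/

/-- The set of starting positions of occurrences of `s` in `w`. -/
def occSet (s w : List α) : Finset ℕ :=
  (Finset.range (w.length + 1)).filter (fun i => s <+: w.drop i)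

lemma countOcc_eq (s w : List α) : countOcc s w = (occSet s w).card := rfl

lemma mem_occSet {s w : List α} {i : ℕ} :
    i ∈ occSet s w ↔ i ≤ w.length ∧ s <+: w.drop i := by
  simp [occSet, Finset.mem_filter, Finset.mem_range, Nat.lt_succ_iff]

lemma occ_add_le {s w : List α} {i : ℕ} (hs : s ≠ []) (h : i ∈ occSet s w) :
    i + s.length ≤ w.length := by
  rw [mem_occSet] at h
  have h2 := h.2.length_le
  rw [List.length_drop] at h2
  have : 0 < s.length := List.length_pos_iff.mpr hs
  omega

lemma drop_eq_of_suffix {u w : List α} (h : u <:+ w) :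
    w.drop (w.length - u.length) = u := (List.suffix_iff_eq_drop.mp h).symm

lemma suffix_mem_occSet {u w : List α} (h : u <:+ w) :
    w.length - u.length ∈ occSet u w := by
  rw [mem_occSet]
  exact ⟨by omega, by rw [drop_eq_of_suffix h]⟩

lemma occ_shift {v s w : List α} {i : ℕ} (hv : v <:+ s) (h : i ∈ occSet s w) :
    i + (s.length - v.length) ∈ occSet v w := by
  rw [mem_occSet] at h ⊢
  obtain ⟨hi1, hpre⟩ := h
  obtain ⟨a, rfl⟩ := hv
  have hlen := hpre.length_le
  rw [List.length_drop] at hlen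
  constructor
  · simp only [List.length_append] at hlen ⊢
    omega
  · have hd : (a ++ v).length - v.length = a.length := by simp
    rw [hd, ← List.drop_drop]
    obtain ⟨t, ht⟩ := hpre
    rw [← ht, List.append_assoc, List.drop_left]
    exact List.prefix_append _ _

lemma occ_lift {s w W : List α} {i : ℕ} (hw : w <:+ W) (h : i ∈ occSet s w) :
    (W.length - w.length) + i ∈ occSet s W := by
  rw [mem_occSet] at h ⊢
  obtain ⟨hi1, hpre⟩ := h
  have hd : W.drop (W.length - w.length) = w := drop_eq_of_suffix hw
  have hl := hw.length_le
  refine ⟨by omega, ?_⟩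
  have he : W.drop (W.length - w.length + i) = w.drop i := by
    conv_rhs => rw [← hd]
    rw [List.drop_drop]
  rw [he]
  exact hpre

lemma occ_restrict {s w W : List α} {i : ℕ} (hw : w <:+ W) (h : i ∈ occSet s W)
    (hi : W.length - w.length ≤ i) : i - (W.length - w.length) ∈ occSet s w := by
  rw [mem_occSet] at h ⊢
  obtain ⟨hi1, hpre⟩ := h
  have hd : W.drop (W.length - w.length) = w := drop_eq_of_suffix hw
  have hl := hw.length_le
  have hwl : w.length = W.length - (W.length - w.length) := by omega
  refine ⟨by omega, ?_⟩
  have he : w.drop (i - (W.length - w.length)) = W.drop i := by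
    have hdl : (W.drop (W.length - w.length)).length = w.length := by rw [hd]
    conv_lhs => rw [← hd]
    rw [List.drop_drop]
    congr 1
    omega
  rw [he]
  exact hpre

lemma countOcc_le_of_suffix {v s : List α} (w : List α) (hv : v <:+ s) :
    countOcc s w ≤ countOcc v w := by
  rw [countOcc_eq, countOcc_eq]
  apply Finset.card_le_card_of_injOn (fun i => i + (s.length - v.length))
    (fun i hi => occ_shift hv hi)
  intro a _ b _ h
  simpa using h

lemma countOcc_le_of_suffix_word {s w W : List α} (hw : w <:+ W) :
    countOcc s w ≤ countOcc s W := by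
  rw [countOcc_eq, countOcc_eq]
  apply Finset.card_le_card_of_injOn (fun i => (W.length - w.length) + i)
    (fun i hi => occ_lift hw hi)
  intro a _ b _ h
  simpa using h

lemma prefix_take {s x : List α} (h : s <+: x) (m : ℕ) (hm : s.length ≤ m) :
    s <+: x.take m := by
  rw [List.prefix_iff_eq_take] at h ⊢
  conv_lhs => rw [h]
  rw [List.take_take, min_eq_left hm]

lemma occ_take {s w : List α} {i k : ℕ} (h : i ∈ occSet s w) (hk : i + s.length ≤ k) :
    i ∈ occSet s (w.take k) := by
  rw [mem_occSet] at h ⊢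
  constructor
  · rw [List.length_take]
    have := h.1
    omega
  · have hdt : (w.take k).drop i = (w.drop i).take (k - i) := List.drop_take ..
    rw [hdt]
    exact prefix_take h.2 _ (by omega)

lemma occ_of_occ_take {s w : List α} {i k : ℕ} (h : i ∈ occSet s (w.take k)) :
    i ∈ occSet s w := by
  rw [mem_occSet] at h ⊢
  have hl : (w.take k).length ≤ w.length := by
    rw [List.length_take]; omega
  refine ⟨le_trans h.1 hl, ?_⟩
  have hpre : (w.take k).drop i <+: w.drop i := by
    rw [List.drop_take]
    exact List.take_prefix _ _
  exact h.2.trans hpre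

lemma infix_iff_occ {s w : List α} : s <:+: w ↔ ∃ i, i ∈ occSet s w := by
  constructor
  · rintro ⟨a, t, rfl⟩
    refine ⟨a.length, ?_⟩
    rw [mem_occSet]
    constructor
    · simp only [List.length_append]; omega
    · rw [List.append_assoc, List.drop_left]
      exact List.prefix_append _ _
  · rintro ⟨i, hi⟩
    rw [mem_occSet] at hi
    exact hi.2.isInfix.trans (List.drop_suffix i w).isInfix

lemma suffix_take_of_occ {s w : List α} {i : ℕ} (h : i ∈ occSet s w) :
    s <:+ w.take (i + s.length) := by
  rw [mem_occSet] at h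
  have : w.take (i + s.length) = w.take i ++ s := by
    rw [List.take_add]
    congr 1
    exact (List.prefix_iff_eq_take.mp h.2).symm
  rw [this]
  exact List.suffix_append _ _

lemma countOcc_nil (w : List α) : countOcc ([] : List α) w = w.length + 1 := by
  rw [countOcc]
  rw [Finset.filter_true_of_mem (fun i _ => List.nil_prefix), Finset.card_range]

lemma suffix_of_suffix_le {u v w : List α} (hu : u <:+ w) (hv : v <:+ w)
    (h : u.length ≤ v.length) : u <:+ v := by
  have h1 : w.drop (w.length - u.length) = u := drop_eq_of_suffix hu
  have h2 : w.drop (w.length - v.length) = v := drop_eq_of_suffix hv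
  have hlv := hv.length_le
  have e : v.drop (v.length - u.length) = u := by
    have d1 : (w.drop (w.length - u.length)).length = u.length := by rw [h1]
    have d2 : (w.drop (w.length - v.length)).length = v.length := by rw [h2]
    conv_lhs => rw [← h2]
    rw [List.drop_drop, ← h1]
    congr 1
    omega
  have ht := List.take_append_drop (v.length - u.length) v
  rw [e] at ht
  exact ⟨_, ht⟩

/-! ### lrs machinery -/

/-- The candidate lengths for repeating suffixes of `w`. -/
def Kset (w : List α) : Finset ℕ :=
  (Finset.range (w.length + 1)).filter (fun k => 2 ≤ countOcc (w.drop (w.length - k)) w)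

/-- The length of the longest repeating suffix of `w`. -/
def KK (w : List α) : ℕ := (Kset w).sup id

lemma lrs_def (w : List α) : lrs w = w.drop (w.length - KK w) := rfl

lemma KK_le (w : List α) : KK w ≤ w.length := by
  apply Finset.sup_le
  intro k hk
  rw [Kset, Finset.mem_filter, Finset.mem_range] at hk
  simpa using Nat.lt_succ_iff.mp hk.1

lemma length_lrs (w : List α) : (lrs w).length = KK w := by
  rw [lrs_def, List.length_drop]
  have := KK_le w
  omega

lemma lrs_suffix (w : List α) : lrs w <:+ w := List.drop_suffix _ _

lemma Kset_zero {w : List α} (hw : w ≠ []) : 0 ∈ Kset w := by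
  rw [Kset, Finset.mem_filter, Finset.mem_range]
  refine ⟨by omega, ?_⟩
  rw [Nat.sub_zero, List.drop_length, countOcc_nil]
  have : 0 < w.length := List.length_pos_iff.mpr hw
  omega

lemma countOcc_lrs {w : List α} (hw : w ≠ []) : 2 ≤ countOcc (lrs w) w := by
  obtain ⟨b, hb, he⟩ := Finset.exists_mem_eq_sup (Kset w) ⟨0, Kset_zero hw⟩ id
  rw [lrs_def]
  have hKb : KK w = b := he
  rw [hKb]
  rw [Kset, Finset.mem_filter] at hb
  exact hb.2

lemma le_KK {v w : List α} (hv : v <:+ w) (h2 : 2 ≤ countOcc v w) : v.length ≤ KK w := by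
  have hm : v.length ∈ Kset w := by
    rw [Kset, Finset.mem_filter, Finset.mem_range]
    refine ⟨by have := hv.length_le; omega, ?_⟩
    rw [drop_eq_of_suffix hv]
    exact h2
  exact Finset.le_sup (f := id) hm

lemma KK_lrs_le (w : List α) : KK (lrs w) ≤ KK w := by
  rw [← length_lrs, ← length_lrs w]
  exact (lrs_suffix (lrs w)).length_le

lemma countTwo_iff {S u : List α} (hS : S ≠ []) (hu : u <:+ S) :
    2 ≤ countOcc u S ↔ u.length ≤ KK S := by
  constructor
  · exact le_KK hu
  · intro h
    have hur : u <:+ lrs S :=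
      suffix_of_suffix_le hu (lrs_suffix S) (by rw [length_lrs]; exact h)
    exact le_trans (countOcc_lrs hS) (countOcc_le_of_suffix S hur)

lemma exists_prev_occ {u S : List α} (hu : u <:+ S) (hne : u ≠ [])
    (h2 : 2 ≤ countOcc u S) : ∃ p ∈ occSet u S, p < S.length - u.length := by
  have hl := hu.length_le
  have he : S.length - u.length ∈ occSet u S := suffix_mem_occSet hu
  rw [countOcc_eq] at h2
  have hner : ((occSet u S).erase (S.length - u.length)).Nonempty := by
    rw [← Finset.card_pos, Finset.card_erase_of_mem he]
    omega
  obtain ⟨p, hp⟩ := hner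
  have hpm := Finset.mem_of_mem_erase hp
  have hpne := Finset.ne_of_mem_erase hp
  have hple := occ_add_le hne hpm
  have hu0 : 0 < u.length := List.length_pos_iff.mpr hne
  exact ⟨p, hpm, by omega⟩

lemma newSuffix_iff {S u : List α} (hu : u <:+ S) (hne : u ≠ []) :
    u <:+: S.take (S.length - 1) ↔ 2 ≤ countOcc u S := by
  have hl := hu.length_le
  have hu0 : 0 < u.length := List.length_pos_iff.mpr hne
  constructor
  · intro h
    obtain ⟨i, hi⟩ := infix_iff_occ.mp h
    have hi2 := occ_add_le hne hi
    rw [List.length_take] at hi2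
    have hi2' : i + u.length ≤ S.length - 1 := by omega
    have hiS := occ_of_occ_take hi
    have heS := suffix_mem_occSet hu
    rw [countOcc_eq]
    refine Finset.one_lt_card.mpr ⟨i, hiS, _, heS, ?_⟩
    omega
  · intro h2
    obtain ⟨p, hp, hplt⟩ := exists_prev_occ hu hne h2
    exact infix_iff_occ.mpr ⟨p, occ_take hp (by omega)⟩

lemma closed_ne_nil {u : List α} (h : IsClosedStr u) : u ≠ [] := by
  rintro rfl
  rcases h with h | ⟨b, hb, ⟨_, hpre, _⟩, _⟩
  · simp at h
  · exact hb (List.prefix_nil.mp hpre)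

lemma mem_factors {u w : List α} : u ∈ factors w ↔ u <:+: w := by
  rw [factors, Finset.mem_image]
  constructor
  · rintro ⟨⟨i, k⟩, _, rfl⟩
    exact (List.take_prefix _ _).isInfix.trans (List.drop_suffix _ _).isInfix
  · intro h
    obtain ⟨i, hi⟩ := infix_iff_occ.mp h
    rw [mem_occSet] at hi
    refine ⟨⟨i, u.length⟩, ?_, (List.prefix_iff_eq_take.mp hi.2).symm⟩
    rw [Finset.mem_product]
    simp only [Finset.mem_range]
    have := h.length_le
    omega

/-! ### The rightmost previous occurrence -/

/-- The rightmost occurrence of `v` in `S` strictly before the suffix occurrence. -/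
def prevP (S v : List α) : ℕ :=
  ((occSet v S).filter (fun p => p < S.length - v.length)).sup id

lemma prevP_spec {S v : List α} (hv : v <:+ S) (hne : v ≠ []) (h2 : 2 ≤ countOcc v S) :
    prevP S v ∈ occSet v S ∧ prevP S v < S.length - v.length ∧
      ∀ q ∈ occSet v S, prevP S v < q → q = S.length - v.length := by
  obtain ⟨p0, hp0, hlt0⟩ := exists_prev_occ hv hne h2
  have hFne : ((occSet v S).filter (fun p => p < S.length - v.length)).Nonempty :=
    ⟨p0, Finset.mem_filter.mpr ⟨hp0, hlt0⟩⟩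
  obtain ⟨b, hb, he⟩ := Finset.exists_mem_eq_sup _ hFne id
  have hPb : prevP S v = b := he
  rw [Finset.mem_filter] at hb
  refine ⟨hPb ▸ hb.1, hPb ▸ hb.2, ?_⟩
  intro q hq hlt
  by_contra hne2
  have hql := occ_add_le hne hq
  have hl := hv.length_le
  have hu0 : 0 < v.length := List.length_pos_iff.mpr hne
  have hqlt : q < S.length - v.length := by omega
  have hqF : q ∈ (occSet v S).filter (fun p => p < S.length - v.length) :=
    Finset.mem_filter.mpr ⟨hq, hqlt⟩
  have := Finset.le_sup (f := id) hqF
  have hsup : prevP S v = ((occSet v S).filter (fun p => p < S.length - v.length)).sup id := rfl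
  simp only [id] at this
  omega

lemma prevP_eq {S v : List α} (hv : v <:+ S) (hne : v ≠ []) (h2 : 2 ≤ countOcc v S)
    {p0 : ℕ} (h0 : p0 ∈ occSet v S) (h0lt : p0 < S.length - v.length)
    (hmax0 : ∀ q ∈ occSet v S, p0 < q → q < S.length - v.length → False) :
    prevP S v = p0 := by
  obtain ⟨hp, hlt, _⟩ := prevP_spec hv hne h2
  have h1 : p0 ≤ prevP S v := by
    have : p0 ∈ (occSet v S).filter (fun p => p < S.length - v.length) :=
      Finset.mem_filter.mpr ⟨h0, h0lt⟩
    have := Finset.le_sup (f := id) this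
    exact this
  rcases Nat.lt_or_ge p0 (prevP S v) with h | h
  · exact absurd (hmax0 _ hp h hlt) (by simp)
  · omega

lemma occSet_drop_prevP {S v : List α} (hv : v <:+ S) (hne : v ≠ [])
    (h2 : 2 ≤ countOcc v S) :
    occSet v (S.drop (prevP S v)) = {0, S.length - prevP S v - v.length} ∧
      v.length < S.length - prevP S v := by
  obtain ⟨hp, hlt, hmax⟩ := prevP_spec hv hne h2
  set p := prevP S v with hpdef
  have hpS : p ≤ S.length := (mem_occSet.mp hp).1
  have hl := hv.length_le
  have hWs : (S.drop p) <:+ S := List.drop_suffix _ _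
  have hWl : (S.drop p).length = S.length - p := List.length_drop
  have hd : S.length - (S.drop p).length = p := by omega
  have hvlt : v.length < S.length - p := by omega
  have hvW : v <:+ S.drop p := suffix_of_suffix_le hv hWs (by omega)
  refine ⟨?_, hvlt⟩
  ext q
  simp only [Finset.mem_insert, Finset.mem_singleton]
  constructor
  · intro hq
    have hq' : p + q ∈ occSet v S := by
      have := occ_lift hWs hq
      rwa [hd] at this
    by_cases h0 : q = 0
    · exact Or.inl h0
    · right
      have := hmax _ hq' (by omega)
      have hqle := (mem_occSet.mp hq).1
      omega
  · intro hq
    rcases hq with rfl | rfl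
    · rw [mem_occSet]
      refine ⟨Nat.zero_le _, ?_⟩
      rw [List.drop_zero]
      exact (mem_occSet.mp hp).2
    · have := suffix_mem_occSet hvW
      rwa [hWl] at this

lemma countOcc_drop_prevP {S v : List α} (hv : v <:+ S) (hne : v ≠ [])
    (h2 : 2 ≤ countOcc v S) :
    countOcc v (S.drop (prevP S v)) = 2 ∧ v.length < S.length - prevP S v := by
  obtain ⟨hocc, hlen⟩ := occSet_drop_prevP hv hne h2
  refine ⟨?_, hlen⟩
  rw [countOcc_eq, hocc, Finset.card_insert_of_notMem (by simp; omega),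
    Finset.card_singleton]


/-! ### key per-position facts -/

lemma phi_spec (S : List α) (hS : S ≠ []) {m : ℕ} (hm1 : KK (lrs S) + 1 ≤ m)
    (hm2 : m ≤ KK S) :
    prevP S (S.drop (S.length - m)) ∈ occSet (S.drop (S.length - m)) S ∧
    prevP S (S.drop (S.length - m)) + m < S.length ∧
    KK S < S.length - prevP S (S.drop (S.length - m)) ∧
    IsClosedStr (S.drop (prevP S (S.drop (S.length - m)))) ∧
    countOcc (S.drop (S.length - m)) (S.drop (prevP S (S.drop (S.length - m)))) = 2 := by
  set v := S.drop (S.length - m) with hvdef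
  have hKle := KK_le S
  have hmS : m ≤ S.length := le_trans hm2 hKle
  have hvs : v <:+ S := List.drop_suffix _ _
  have hvl : v.length = m := by rw [hvdef, List.length_drop]; omega
  have hvne : v ≠ [] := by
    intro e
    rw [e] at hvl
    simp at hvl
    omega
  have hrS : lrs S <:+ S := lrs_suffix S
  have hrl : (lrs S).length = KK S := length_lrs S
  have hvr : v <:+ lrs S := suffix_of_suffix_le hvs hrS (by omega)
  have h2 : 2 ≤ countOcc v S := le_trans (countOcc_lrs hS) (countOcc_le_of_suffix S hvr)
  obtain ⟨hp, hplt, hmax⟩ := prevP_spec hvs hvne h2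
  set p := prevP S v with hpdef
  have hpS : p ≤ S.length := (mem_occSet.mp hp).1
  have hplt' : p + m < S.length := by omega
  obtain ⟨hc2, hlen⟩ := countOcc_drop_prevP hvs hvne h2
  have hKlt : KK S < S.length - p := by
    by_contra hle
    push_neg at hle
    have hq : p - (S.length - (lrs S).length) ∈ occSet v (lrs S) :=
      occ_restrict hrS hp (by omega)
    have hsuf : (lrs S).length - v.length ∈ occSet v (lrs S) := suffix_mem_occSet hvr
    have hne2 : p - (S.length - (lrs S).length) ≠ (lrs S).length - v.length := by
      rw [hvl, hrl]
      omega
    have h2r : 2 ≤ countOcc v (lrs S) := by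
      rw [countOcc_eq]
      exact Finset.one_lt_card.mpr ⟨_, hq, _, hsuf, hne2⟩
    have := le_KK hvr h2r
    rw [hvl] at this
    omega
  have hcl : IsClosedStr (S.drop p) := by
    right
    refine ⟨v, hvne, ⟨?_, (mem_occSet.mp hp).2, ?_⟩, hc2⟩
    · intro e
      have : v.length = (S.drop p).length := by rw [e]
      rw [hvl, List.length_drop] at this
      omega
    · refine suffix_of_suffix_le hvs (List.drop_suffix _ _) ?_
      rw [hvl, List.length_drop]
      omega
  exact ⟨hp, hplt', hKlt, hcl, hc2⟩

lemma card_E (S : List α) (hS : S ≠ []) :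
    ((Finset.Icc (KK S + 1) S.length).filter
        (fun ℓ => IsClosedStr (S.drop (S.length - ℓ)))).card
      = if KK S = 0 then 1 else KK S - KK (lrs S) := by
  have hS0 : 0 < S.length := List.length_pos_iff.mpr hS
  by_cases hK : KK S = 0
  · rw [if_pos hK]
    have he : (Finset.Icc (KK S + 1) S.length).filter
        (fun ℓ => IsClosedStr (S.drop (S.length - ℓ))) = {1} := by
      ext ℓ
      simp only [Finset.mem_filter, Finset.mem_Icc, Finset.mem_singleton, hK]
      constructor
      · rintro ⟨⟨h1, h2⟩, hc⟩
        by_contra hne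
        have hℓ2 : 2 ≤ ℓ := by omega
        have hWl : (S.drop (S.length - ℓ)).length = ℓ := by
          rw [List.length_drop]; omega
        rcases hc with h | ⟨b, hbne, ⟨_, _, hbs⟩, hb2⟩
        · omega
        · have hbS : b <:+ S := hbs.trans (List.drop_suffix _ _)
          have h2S : 2 ≤ countOcc b S := by
            have := countOcc_le_of_suffix_word (s := b) (List.drop_suffix (S.length - ℓ) S)
            omega
          have := le_KK hbS h2S
          rw [hK] at this
          exact hbne (List.length_eq_zero_iff.mp (by omega))
      · rintro rfl
        refine ⟨⟨le_refl _, by omega⟩, Or.inl ?_⟩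
        rw [List.length_drop]
        omega
    rw [he, Finset.card_singleton]
  · rw [if_neg hK]
    have hK1 : 1 ≤ KK S := by omega
    have hrl : (lrs S).length = KK S := length_lrs S
    have hrne : lrs S ≠ [] := by
      intro e
      rw [e] at hrl
      simp at hrl
      omega
    have hrS : lrs S <:+ S := lrs_suffix S
    have hKle := KK_le S
    have hcard : KK S - KK (lrs S) = (Finset.Icc (KK (lrs S) + 1) (KK S)).card := by
      rw [Nat.card_Icc]
      omega
    rw [hcard]
    symm
    apply Finset.card_bij (fun m _ => S.length - prevP S (S.drop (S.length - m)))
    · -- maps into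
      intro m hm
      rw [Finset.mem_Icc] at hm
      obtain ⟨hp, hplt, hKlt, hcl, _⟩ := phi_spec S hS hm.1 hm.2
      have hpS : prevP S (S.drop (S.length - m)) ≤ S.length := (mem_occSet.mp hp).1
      rw [Finset.mem_filter, Finset.mem_Icc]
      refine ⟨⟨by omega, by omega⟩, ?_⟩
      have : S.length - (S.length - prevP S (S.drop (S.length - m)))
          = prevP S (S.drop (S.length - m)) := by omega
      rw [this]
      exact hcl
    · -- injective
      intro m₁ hm₁ m₂ hm₂ heq
      rw [Finset.mem_Icc] at hm₁ hm₂
      by_contra hne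
      -- wlog m₁ < m₂
      have key : ∀ m m' : ℕ, KK (lrs S) + 1 ≤ m → m ≤ KK S → KK (lrs S) + 1 ≤ m' →
          m' ≤ KK S → m < m' →
          S.length - prevP S (S.drop (S.length - m)) =
            S.length - prevP S (S.drop (S.length - m')) → False := by
        intro m m' hm1 hm2 hm1' hm2' hlt heq2
        obtain ⟨hp, hplt, _, _, hc2⟩ := phi_spec S hS hm1 hm2
        obtain ⟨hp', hplt', _, _, _⟩ := phi_spec S hS hm1' hm2'
        set v := S.drop (S.length - m) with hvdef
        set v' := S.drop (S.length - m') with hvdef'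
        have hpS : prevP S v ≤ S.length := (mem_occSet.mp hp).1
        have hpS' : prevP S v' ≤ S.length := (mem_occSet.mp hp').1
        have hpp : prevP S v = prevP S v' := by omega
        set p := prevP S v with hpdef
        set W := S.drop p with hWdef
        have hWl : W.length = S.length - p := List.length_drop
        have hmS : m ≤ S.length := by omega
        have hmS' : m' ≤ S.length := by omega
        have hvl : v.length = m := by rw [hvdef, List.length_drop]; omega
        have hvl' : v'.length = m' := by rw [hvdef', List.length_drop]; omega
        have hvv : v <:+ v' := suffix_of_suffix_le (List.drop_suffix _ _)
          (List.drop_suffix _ _) (by omega)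
        -- three occurrences of v in W
        have h0' : (0 : ℕ) ∈ occSet v' W := by
          rw [mem_occSet]
          refine ⟨Nat.zero_le _, ?_⟩
          rw [List.drop_zero, hWdef, hpp]
          exact (mem_occSet.mp hp').2
        have hmid : (0 + (v'.length - v.length)) ∈ occSet v W := occ_shift hvv h0'
        rw [hvl, hvl', Nat.zero_add] at hmid
        have h0 : (0 : ℕ) ∈ occSet v W := by
          rw [mem_occSet]
          exact ⟨Nat.zero_le _, by rw [List.drop_zero, hWdef]; exact (mem_occSet.mp hp).2⟩
        have hend : W.length - v.length ∈ occSet v W :=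
          suffix_mem_occSet (suffix_of_suffix_le (List.drop_suffix _ _)
            (List.drop_suffix _ _) (by omega))
        rw [hvl] at hend
        have hdist1 : (0 : ℕ) < m' - m := by omega
        have hdist2 : m' - m < W.length - m := by
          rw [hWl]
          omega
        have hsub : ({0, m' - m, W.length - m} : Finset ℕ) ⊆ occSet v W := by
          intro x hx
          simp only [Finset.mem_insert, Finset.mem_singleton] at hx
          rcases hx with rfl | rfl | rfl
          · exact h0
          · exact hmid
          · exact hend
        have h3 : 3 ≤ (occSet v W).card := by
          refine le_trans ?_ (Finset.card_le_card hsub)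
          rw [Finset.card_insert_of_notMem (by simp; omega),
            Finset.card_insert_of_notMem (by simp; omega), Finset.card_singleton]
        rw [countOcc_eq] at hc2
        omega
      rcases Nat.lt_trichotomy m₁ m₂ with h | h | h
      · exact key m₁ m₂ hm₁.1 hm₁.2 hm₂.1 hm₂.2 h heq
      · exact hne h
      · exact key m₂ m₁ hm₂.1 hm₂.2 hm₁.1 hm₁.2 h heq.symm
    · -- surjective
      intro ℓ hℓ
      rw [Finset.mem_filter, Finset.mem_Icc] at hℓ
      obtain ⟨⟨hℓ1, hℓ2⟩, hcl⟩ := hℓ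
      set W := S.drop (S.length - ℓ) with hWdef
      have hWl : W.length = ℓ := by rw [hWdef, List.length_drop]; omega
      have hWs : W <:+ S := List.drop_suffix _ _
      rcases hcl with h1 | ⟨b, hbne, ⟨hbW, hbp, hbs⟩, hb2⟩
      · omega
      · have hbS : b <:+ S := hbs.trans hWs
        have hbl : 1 ≤ b.length := List.length_pos_iff.mpr hbne
        have h2S : 2 ≤ countOcc b S := by
          have := countOcc_le_of_suffix_word (s := b) hWs
          omega
        have hmK : b.length ≤ KK S := le_KK hbS h2S
        have hmle : b.length ≤ W.length := hbp.length_le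
        have hmlt : b.length < ℓ := by
          rcases Nat.lt_or_ge b.length ℓ with h | h
          · exact h
          · exact absurd (hbp.eq_of_length (by omega)) hbW
        -- b.length > KK (lrs S)
        have hmr : KK (lrs S) + 1 ≤ b.length := by
          by_contra hle
          push_neg at hle
          have hble : b.length ≤ KK (lrs S) := by omega
          have hr2 : 2 ≤ countOcc (lrs (lrs S)) (lrs S) := countOcc_lrs hrne
          rw [countOcc_eq] at hr2
          obtain ⟨q1, hq1, q2, hq2, hq12⟩ := Finset.one_lt_card.mp hr2
          have hrW : lrs S <:+ W := suffix_of_suffix_le hrS hWs (by omega)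
          have hdW : W.length - (lrs S).length = ℓ - KK S := by rw [hWl, hrl]
          have hQ1 := occ_lift hrW hq1
          have hQ2 := occ_lift hrW hq2
          have hrrl : (lrs (lrs S)).length = KK (lrs S) := length_lrs (lrs S)
          have hbr2 : b <:+ lrs (lrs S) :=
            suffix_of_suffix_le hbS ((lrs_suffix (lrs S)).trans hrS) (by omega)
          have hB1 := occ_shift hbr2 hQ1
          have hB2 := occ_shift hbr2 hQ2
          have h0 : (0 : ℕ) ∈ occSet b W := by
            rw [mem_occSet]
            exact ⟨Nat.zero_le _, by rw [List.drop_zero]; exact hbp⟩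
          have hd1 : 1 ≤ W.length - (lrs S).length := by omega
          have hsub : ({0, W.length - (lrs S).length + q1 + ((lrs (lrs S)).length - b.length),
              W.length - (lrs S).length + q2 + ((lrs (lrs S)).length - b.length)} :
              Finset ℕ) ⊆ occSet b W := by
            intro x hx
            simp only [Finset.mem_insert, Finset.mem_singleton] at hx
            rcases hx with rfl | rfl | rfl
            · exact h0
            · exact hB1
            · exact hB2
          have h3 : 3 ≤ (occSet b W).card := by
            refine le_trans ?_ (Finset.card_le_card hsub)
            rw [Finset.card_insert_of_notMem, Finset.card_insert_of_notMem,
              Finset.card_singleton]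
            · simp only [Finset.mem_singleton]
              omega
            · simp only [Finset.mem_insert, Finset.mem_singleton]
              push_neg
              omega
          rw [countOcc_eq] at hb2
          omega
        -- now identify prevP S b
        have hbd : S.drop (S.length - b.length) = b := drop_eq_of_suffix hbS
        have hocc0 : S.length - ℓ ∈ occSet b S := by
          rw [mem_occSet]
          exact ⟨by omega, hbp⟩
        have hpair : ({0, ℓ - b.length} : Finset ℕ) ⊆ occSet b W := by
          intro x hx
          simp only [Finset.mem_insert, Finset.mem_singleton] at hx
          rcases hx with rfl | rfl
          · rw [mem_occSet]
            exact ⟨Nat.zero_le _, by rw [List.drop_zero]; exact hbp⟩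
          · have := suffix_mem_occSet hbs
            rwa [hWl] at this
        have hpaircard : ({0, ℓ - b.length} : Finset ℕ).card = 2 := by
          rw [Finset.card_insert_of_notMem (by simp only [Finset.mem_singleton]; omega),
            Finset.card_singleton]
        have hEq : occSet b W = {0, ℓ - b.length} := by
          refine (Finset.eq_of_subset_of_card_le hpair ?_).symm
          rw [← countOcc_eq, hb2, hpaircard]
        have hmaxprop : ∀ q ∈ occSet b S, S.length - ℓ < q → q < S.length - b.length → False := by
          intro q hq hlt1 hlt2
          have hq' : q - (S.length - W.length) ∈ occSet b W :=
            occ_restrict hWs hq (by omega)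
          rw [hEq] at hq'
          simp only [Finset.mem_insert, Finset.mem_singleton] at hq'
          rw [hWl] at hq'
          omega
        have hprev : prevP S b = S.length - ℓ :=
          prevP_eq hbS hbne h2S hocc0 (by omega) hmaxprop
        refine ⟨b.length, Finset.mem_Icc.mpr ⟨hmr, hmK⟩, ?_⟩
        rw [hbd, hprev]
        omega

/-! ### from word-level to position-level sets -/

/-- The set of closed factors of `T` whose first ending position is `j`. -/
noncomputable def Dset (T : List α) (j : ℕ) : Finset (List α) :=
  (closedFactors T).filter (fun u => u <:+ T.take j ∧ ¬ u <:+: T.take (j - 1))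

lemma Dset_card (T : List α) {j : ℕ} (hj : j ∈ Finset.Icc 1 T.length) :
    (Dset T j).card =
      if KK (T.take j) = 0 then 1 else KK (T.take j) - KK (lrs (T.take j)) := by
  rw [Finset.mem_Icc] at hj
  set S := T.take j with hSdef
  have hSl : S.length = j := by rw [hSdef, List.length_take]; omega
  have hSne : S ≠ [] := by
    intro e
    rw [e] at hSl
    simp at hSl
    omega
  rw [← card_E S hSne]
  have htp : T.take (j - 1) = S.take (S.length - 1) := by
    rw [hSdef, hSl, List.take_take, min_eq_left (by omega)]
  symm
  apply Finset.card_bij (fun ℓ _ => S.drop (S.length - ℓ))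
  · intro ℓ hℓ
    rw [Finset.mem_filter, Finset.mem_Icc] at hℓ
    obtain ⟨⟨hℓ1, hℓ2⟩, hcl⟩ := hℓ
    have hWs : S.drop (S.length - ℓ) <:+ S := List.drop_suffix _ _
    have hWl : (S.drop (S.length - ℓ)).length = ℓ := by rw [List.length_drop]; omega
    have hWne : S.drop (S.length - ℓ) ≠ [] := by
      intro e
      rw [e] at hWl
      simp at hWl
      omega
    rw [Dset, Finset.mem_filter]
    refine ⟨?_, hWs, ?_⟩
    · rw [closedFactors, Finset.mem_filter]
      refine ⟨mem_factors.mpr (hWs.isInfix.trans ?_), hcl⟩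
      exact (List.take_prefix j T).isInfix
    · rw [htp]
      intro hbad
      have h2 := (newSuffix_iff hWs hWne).mp hbad
      have := le_KK hWs h2
      rw [hWl] at this
      omega
  · intro ℓ₁ hℓ₁ ℓ₂ hℓ₂ heq
    rw [Finset.mem_filter, Finset.mem_Icc] at hℓ₁ hℓ₂
    have e1 : (S.drop (S.length - ℓ₁)).length = ℓ₁ := by
      rw [List.length_drop]; omega
    have e2 : (S.drop (S.length - ℓ₂)).length = ℓ₂ := by
      rw [List.length_drop]; omega
    rw [← e1, ← e2, heq]
  · intro u hu
    rw [Dset, Finset.mem_filter] at hu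
    obtain ⟨hcf, hus, hni⟩ := hu
    rw [closedFactors, Finset.mem_filter] at hcf
    have hcl := hcf.2
    have hune : u ≠ [] := closed_ne_nil hcl
    have hul : 1 ≤ u.length := List.length_pos_iff.mpr hune
    have hule := hus.length_le
    have hKS : KK S + 1 ≤ u.length := by
      by_contra hc
      push_neg at hc
      have h2 : 2 ≤ countOcc u S := (countTwo_iff hSne hus).mpr (by omega)
      exact hni (htp ▸ (newSuffix_iff hus hune).mpr h2)
    refine ⟨u.length, Finset.mem_filter.mpr ⟨Finset.mem_Icc.mpr ⟨hKS, hule⟩, ?_⟩,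
      drop_eq_of_suffix hus⟩
    rw [drop_eq_of_suffix hus]
    exact hcl

lemma closedFactors_eq_biUnion (T : List α) :
    closedFactors T = (Finset.Icc 1 T.length).biUnion (Dset T) := by
  ext u
  simp only [Finset.mem_biUnion]
  constructor
  · intro hu
    have hinf : u <:+: T := mem_factors.mp (Finset.mem_filter.mp hu).1
    have hune : u ≠ [] := closed_ne_nil (Finset.mem_filter.mp hu).2
    have hul : 1 ≤ u.length := List.length_pos_iff.mpr hune
    set F := (Finset.Icc 1 T.length).filter (fun j => u <:+ T.take j) with hF
    have hFne : F.Nonempty := by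
      obtain ⟨i, hi⟩ := infix_iff_occ.mp hinf
      have h1 := occ_add_le hune hi
      refine ⟨i + u.length, ?_⟩
      rw [hF, Finset.mem_filter, Finset.mem_Icc]
      exact ⟨⟨by omega, h1⟩, suffix_take_of_occ hi⟩
    set j := F.min' hFne with hj
    have hjF : j ∈ F := Finset.min'_mem _ _
    rw [hF, Finset.mem_filter, Finset.mem_Icc] at hjF
    refine ⟨j, Finset.mem_Icc.mpr hjF.1, ?_⟩
    rw [Dset, Finset.mem_filter]
    refine ⟨hu, hjF.2, ?_⟩
    intro hbad
    obtain ⟨i, hi⟩ := infix_iff_occ.mp hbad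
    have hi2 := occ_add_le hune hi
    rw [List.length_take] at hi2
    have hiT : i ∈ occSet u T := occ_of_occ_take hi
    have hiTle := occ_add_le hune hiT
    have hmem : i + u.length ∈ F := by
      rw [hF, Finset.mem_filter, Finset.mem_Icc]
      exact ⟨⟨by omega, hiTle⟩, suffix_take_of_occ hiT⟩
    have := Finset.min'_le F _ hmem
    rw [← hj] at this
    have hj1 := hjF.1.1
    omega
  · rintro ⟨j, _, hD⟩
    exact (Finset.mem_filter.mp hD).1

lemma Dset_disjoint (T : List α) {j j' : ℕ} (hjj : j < j') :
    Disjoint (Dset T j) (Dset T j') := by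
  rw [Finset.disjoint_left]
  intro u hu hu'
  rw [Dset, Finset.mem_filter] at hu hu'
  apply hu'.2.2
  have hpre : T.take j <+: T.take (j' - 1) := by
    have : T.take j = (T.take (j' - 1)).take j := by
      rw [List.take_take, min_eq_left (by omega)]
    rw [this]
    exact List.take_prefix _ _
  exact hu.2.1.isInfix.trans hpre.isInfix

lemma card_closedFactors_eq_sum (T : List α) :
    (closedFactors T).card = ∑ j ∈ Finset.Icc 1 T.length, (Dset T j).card := by
  rw [closedFactors_eq_biUnion T]
  apply Finset.card_biUnion
  intro j _ j' _ hne
  rcases Nat.lt_trichotomy j j' with h | h | h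
  · exact Dset_disjoint T h
  · exact absurd h hne
  · exact (Dset_disjoint T h).symm

theorem stmt5 (T : List α) :
    ((closedFactors T).card : ℤ) =
      (∑ j ∈ (Finset.Icc 1 T.length).filter (fun j => lrs (T.take j) ≠ []),
        ((lrs (T.take j)).length : ℤ)) -
      (∑ j ∈ (Finset.Icc 1 T.length).filter (fun j => lrs (T.take j) ≠ []),
        ((lrs (lrs (T.take j))).length : ℤ)) +
      T.length -
      ((Finset.Icc 1 T.length).filter (fun j => lrs (T.take j) ≠ [])).card := by
  classical
  have hKiff : ∀ j, (lrs (T.take j) ≠ []) ↔ KK (T.take j) ≠ 0 := by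
    intro j
    rw [Ne, Ne, ← List.length_eq_zero_iff, length_lrs]
  rw [card_closedFactors_eq_sum T]
  rw [← Finset.sum_filter_add_sum_filter_not (Finset.Icc 1 T.length)
    (fun j => lrs (T.take j) ≠ []) (fun j => (Dset T j).card)]
  have hsum1 : ∑ j ∈ (Finset.Icc 1 T.length).filter (fun j => lrs (T.take j) ≠ []),
      (Dset T j).card
      = ∑ j ∈ (Finset.Icc 1 T.length).filter (fun j => lrs (T.take j) ≠ []),
        (KK (T.take j) - KK (lrs (T.take j))) := by
    apply Finset.sum_congr rfl
    intro j hj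
    rw [Finset.mem_filter] at hj
    rw [Dset_card T hj.1, if_neg ((hKiff j).mp hj.2)]
  have hsum2 : ∑ j ∈ (Finset.Icc 1 T.length).filter (fun j => ¬ lrs (T.take j) ≠ []),
      (Dset T j).card
      = ((Finset.Icc 1 T.length).filter (fun j => ¬ lrs (T.take j) ≠ [])).card := by
    rw [Finset.card_eq_sum_ones]
    apply Finset.sum_congr rfl
    intro j hj
    rw [Finset.mem_filter] at hj
    have hK0 : KK (T.take j) = 0 := by
      by_contra hc
      exact hj.2 ((hKiff j).mpr hc)
    rw [Dset_card T hj.1, if_pos hK0]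
  rw [hsum1, hsum2]
  have hcards : ((Finset.Icc 1 T.length).filter (fun j => lrs (T.take j) ≠ [])).card
      + ((Finset.Icc 1 T.length).filter (fun j => ¬ lrs (T.take j) ≠ [])).card
      = T.length := by
    rw [Finset.card_filter_add_card_filter_not, Nat.card_Icc]
    omega
  have hA : ((∑ j ∈ (Finset.Icc 1 T.length).filter (fun j => lrs (T.take j) ≠ []),
        (KK (T.take j) - KK (lrs (T.take j))) : ℕ) : ℤ)
      = ∑ j ∈ (Finset.Icc 1 T.length).filter (fun j => lrs (T.take j) ≠ []),
        (((lrs (T.take j)).length : ℤ) - ((lrs (lrs (T.take j))).length : ℤ)) := by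
    rw [Nat.cast_sum]
    apply Finset.sum_congr rfl
    intro j hj
    have hle := KK_lrs_le (T.take j)
    have h1 : (lrs (T.take j)).length = KK (T.take j) := length_lrs _
    have h2 : (lrs (lrs (T.take j))).length = KK (lrs (T.take j)) := length_lrs _
    rw [h1, h2]
    omega
  rw [Nat.cast_add, hA, Finset.sum_sub_distrib]
  have hB : ((((Finset.Icc 1 T.length).filter (fun j => ¬ lrs (T.take j) ≠ [])).card : ℕ) : ℤ)
      = (T.length : ℤ)
        - (((Finset.Icc 1 T.length).filter (fun j => lrs (T.take j) ≠ [])).card : ℤ) := by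
    omega
  rw [hB]
  ring
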